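/- Let h: ℝⁿ → ℝ be λ̄-strongly convex (λ̄ ≥ 0), x₀ ∈ ℝⁿ, θ₁, θ₂ ≥ 0, and define h̄(x) = h(x) + (θ₁/2)‖x−x₀‖² + (θ₂/3)‖x−x₀‖³ with minimizer x̄. Then for all x ∈ ℝⁿ, h̄(x) ≥ h̄(x̄) + ((θ₁+λ̄)/2)‖x−x̄‖² + (θ₂/6)‖x−x̄‖³. -/
import Mathlib


open scoped RealInnerProductSpace

set_option maxHeartbeats 1000000

lemma cube_scalar (α β d : ℝ) (ha : 0 ≤ α) (hb : 0 ≤ β) (hd : 0 ≤ d)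
    (htri : d ≤ α + β) :
    0 ≤ d^2*(3*α - d) + (β-α)^2*(2*β+α) := by
  rcases le_or_gt d (3*α) with hc | hc
  · nlinarith [sq_nonneg (β-α), sq_nonneg d]
  · have h1 : d^2*(d-3*α) ≤ (α+β)^2*(β-2*α) := by
      have hd3 : 0 < d - 3*α := by linarith
      have hdd : d^2 ≤ (α+β)^2 := by nlinarith
      have hfac : d - 3*α ≤ β - 2*α := by linarith
      calc d^2*(d-3*α) ≤ (α+β)^2*(d-3*α) := by nlinarith
        _ ≤ (α+β)^2*(β-2*α) := by nlinarith [sq_nonneg (α+β)]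
    have h2 : (α+β)^2*(β-2*α) ≤ (β-α)^2*(2*β+α) := by
      nlinarith [mul_nonneg hb (sq_nonneg (2*β-3*α)), mul_nonneg (mul_nonneg ha ha) hb,
        mul_nonneg (mul_nonneg ha ha) ha]
    nlinarith

lemma cube_lower {E : Type*} [NormedAddCommGroup E] [InnerProductSpace ℝ E] (a b : E) :
    ‖a‖^3 + 3*‖a‖*⟪a, b - a⟫ + (1/2)*‖b - a‖^3 ≤ ‖b‖^3 := by
  have h1 : ⟪a, b - a⟫ = ⟪a,b⟫ - ‖a‖^2 := by
    rw [inner_sub_right, real_inner_self_eq_norm_sq]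
  have h2 : ‖b - a‖^2 = ‖b‖^2 - 2*⟪b,a⟫ + ‖a‖^2 := norm_sub_sq_real b a
  have hc : ⟪b,a⟫ = ⟪a,b⟫ := real_inner_comm a b
  have htri : ‖b - a‖ ≤ ‖a‖ + ‖b‖ := by
    have := norm_sub_le b a; linarith [this]
  have key := cube_scalar ‖a‖ ‖b‖ ‖b-a‖ (norm_nonneg a) (norm_nonneg b) (norm_nonneg _) htri
  nlinarith [key, h1, h2, norm_nonneg (b-a), norm_nonneg a, norm_nonneg b]

lemma quad_jensen {E : Type*} [NormedAddCommGroup E] [InnerProductSpace ℝ E] (a b : E) (t : ℝ) :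
    ‖(1-t)•a + t•b‖^2 + t*(1-t)*‖a-b‖^2 = (1-t)*‖a‖^2 + t*‖b‖^2 := by
  have h1 : ‖(1-t)•a + t•b‖^2 = ‖(1-t)•a‖^2 + 2*⟪(1-t)•a, t•b⟫ + ‖t•b‖^2 :=
    norm_add_sq_real _ _
  have h2 : ‖a-b‖^2 = ‖a‖^2 - 2*⟪a,b⟫ + ‖b‖^2 := norm_sub_sq_real a b
  have h3 : ⟪(1-t)•a, t•b⟫ = (1-t)*t*⟪a,b⟫ := by
    rw [real_inner_smul_left, real_inner_smul_right]; ring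
  have h4 : ‖(1-t)•a‖^2 = (1-t)^2*‖a‖^2 := by
    rw [norm_smul, mul_pow, Real.norm_eq_abs, sq_abs]
  have h5 : ‖t•b‖^2 = t^2*‖b‖^2 := by
    rw [norm_smul, mul_pow, Real.norm_eq_abs, sq_abs]
  nlinarith [h1, h2, h3, h4, h5, real_inner_self_eq_norm_sq a, real_inner_self_eq_norm_sq b]

lemma cube_jensen {E : Type*} [NormedAddCommGroup E] [InnerProductSpace ℝ E] (a b : E)
    (t : ℝ) (ht0 : 0 ≤ t) (ht1 : t ≤ 1) :
    ‖(1-t)•a + t•b‖^3 + 1/2*(t*(1-t)*(t^2+(1-t)^2))*‖a-b‖^3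
      ≤ (1-t)*‖a‖^3 + t*‖b‖^3 := by
  set z := (1-t)•a + t•b with hzdef
  have haz : a - z = t • (a - b) := by rw [hzdef]; module
  have hbz : b - z = (1-t) • (b - a) := by rw [hzdef]; module
  have H1 := cube_lower z a
  have H2 := cube_lower z b
  have hna : ‖a - z‖ = t * ‖a - b‖ := by
    rw [haz, norm_smul, Real.norm_eq_abs, abs_of_nonneg ht0]
  have hnb : ‖b - z‖ = (1-t) * ‖a - b‖ := by
    rw [hbz, norm_smul, Real.norm_eq_abs, abs_of_nonneg (by linarith), norm_sub_rev]
  have hinner : (1-t)*⟪z, a - z⟫ + t*⟪z, b - z⟫ = 0 := by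
    have hba : ⟪z, b - a⟫ = -⟪z, a - b⟫ := by
      rw [← neg_sub a b, inner_neg_right]
    rw [haz, hbz, real_inner_smul_right, real_inner_smul_right, hba]; ring
  rw [hna] at H1
  rw [hnb] at H2
  have HA := mul_le_mul_of_nonneg_left H1 (by linarith : (0:ℝ) ≤ 1-t)
  have HB := mul_le_mul_of_nonneg_left H2 ht0
  have hinner3 : ‖z‖*((1-t)*⟪z, a - z⟫ + t*⟪z, b - z⟫) = 0 := by rw [hinner]; ring
  nlinarith [HA, HB, hinner3]

/-- For h λ̄-strongly convex (expressed via a subgradient selection s) and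
h̄(x) = h(x) + (θ₁/2)‖x−x₀‖² + (θ₂/3)‖x−x₀‖³ with minimizer x̄,
h̄(x) ≥ h̄(x̄) + ((θ₁+λ̄)/2)‖x−x̄‖² + (θ₂/6)‖x−x̄‖³. -/
theorem stmt_6 (n : ℕ) (h : EuclideanSpace ℝ (Fin n) → ℝ)
    (s : EuclideanSpace ℝ (Fin n) → EuclideanSpace ℝ (Fin n))
    (lam θ₁ θ₂ : ℝ) (hlam : 0 ≤ lam) (hθ₁ : 0 ≤ θ₁) (hθ₂ : 0 ≤ θ₂)
    (hstrong : ∀ x y, h x ≥ h y + ⟪s y, x - y⟫ + lam / 2 * ‖x - y‖ ^ 2)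
    (x₀ xbar : EuclideanSpace ℝ (Fin n))
    (hmin : ∀ x, h xbar + θ₁ / 2 * ‖xbar - x₀‖ ^ 2 + θ₂ / 3 * ‖xbar - x₀‖ ^ 3
      ≤ h x + θ₁ / 2 * ‖x - x₀‖ ^ 2 + θ₂ / 3 * ‖x - x₀‖ ^ 3) :
    ∀ x, h x + θ₁ / 2 * ‖x - x₀‖ ^ 2 + θ₂ / 3 * ‖x - x₀‖ ^ 3
      ≥ h xbar + θ₁ / 2 * ‖xbar - x₀‖ ^ 2 + θ₂ / 3 * ‖xbar - x₀‖ ^ 3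
        + (θ₁ + lam) / 2 * ‖x - xbar‖ ^ 2 + θ₂ / 6 * ‖x - xbar‖ ^ 3 := by
  intro x
  set r : ℝ := ‖x - xbar‖ with hr
  set D : ℝ := (h x + θ₁ / 2 * ‖x - x₀‖ ^ 2 + θ₂ / 3 * ‖x - x₀‖ ^ 3)
    - (h xbar + θ₁ / 2 * ‖xbar - x₀‖ ^ 2 + θ₂ / 3 * ‖xbar - x₀‖ ^ 3) with hD
  have key : ∀ t : ℝ, t ∈ Set.Ioc (0:ℝ) 1 →
      (θ₁ + lam) / 2 * ((1-t) * r ^ 2) + θ₂ / 6 * ((1-t)*(t^2+(1-t)^2) * r ^ 3) ≤ D := by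
    rintro t ⟨ht0, ht1⟩
    set z : EuclideanSpace ℝ (Fin n) := xbar + t • (x - xbar) with hz
    have hxz : x - z = (1-t) • (x - xbar) := by rw [hz]; module
    have hbz : xbar - z = (-t) • (x - xbar) := by rw [hz]; module
    have hnxz : ‖x - z‖ = (1-t) * r := by
      rw [hxz, norm_smul, Real.norm_eq_abs, abs_of_nonneg (by linarith), hr]
    have hnbz : ‖xbar - z‖ = t * r := by
      rw [hbz, norm_smul, Real.norm_eq_abs, abs_neg, abs_of_nonneg ht0.le, hr]
    have H1 := hstrong x z
    have H2 := hstrong xbar z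
    rw [hnxz] at H1
    rw [hnbz] at H2
    have hinner : t * ⟪s z, x - z⟫ + (1-t) * ⟪s z, xbar - z⟫ = 0 := by
      rw [hxz, hbz, real_inner_smul_right, real_inner_smul_right]; ring
    have A1 := mul_le_mul_of_nonneg_left H1.le ht0.le
    have A2 := mul_le_mul_of_nonneg_left H2.le (by linarith : (0:ℝ) ≤ 1-t)
    have hz0 : z - x₀ = (1-t) • (xbar - x₀) + t • (x - x₀) := by rw [hz]; module
    have hsub : (xbar - x₀) - (x - x₀) = xbar - x := by module
    have hrr : ‖xbar - x‖ = r := by rw [hr]; exact norm_sub_rev xbar x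
    have B := quad_jensen (xbar - x₀) (x - x₀) t
    rw [← hz0, hsub, hrr] at B
    have B' : θ₁/2 * (‖z - x₀‖^2 + t*(1-t)*r^2)
        = θ₁/2 * ((1-t)*‖xbar - x₀‖^2 + t*‖x - x₀‖^2) := by rw [B]
    have C := cube_jensen (xbar - x₀) (x - x₀) t ht0.le ht1
    rw [← hz0, hsub, hrr] at C
    have C' := mul_le_mul_of_nonneg_left C (by positivity : (0:ℝ) ≤ θ₂/3)
    have Hm := hmin z
    have comb : t * ((θ₁ + lam) / 2 * ((1-t) * r ^ 2)
        + θ₂ / 6 * ((1-t)*(t^2+(1-t)^2) * r ^ 3)) ≤ t * D := by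
      rw [hD]; linarith [A1, A2, B', C', Hm, hinner]
    exact le_of_mul_le_mul_left comb ht0
  have hf : Filter.Tendsto (fun t : ℝ => (θ₁ + lam) / 2 * ((1-t) * r ^ 2)
      + θ₂ / 6 * ((1-t)*(t^2+(1-t)^2) * r ^ 3)) (nhdsWithin 0 (Set.Ioi 0))
      (nhds ((θ₁ + lam) / 2 * ((1-(0:ℝ)) * r ^ 2)
        + θ₂ / 6 * ((1-(0:ℝ))*((0:ℝ)^2+(1-(0:ℝ))^2) * r ^ 3))) :=
    ((Continuous.tendsto (by continuity) 0)).mono_left nhdsWithin_le_nhds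
  have hev : ∀ᶠ t in nhdsWithin (0:ℝ) (Set.Ioi 0),
      (θ₁ + lam) / 2 * ((1-t) * r ^ 2) + θ₂ / 6 * ((1-t)*(t^2+(1-t)^2) * r ^ 3) ≤ D := by
    filter_upwards [Ioc_mem_nhdsGT_of_mem (by norm_num : (0:ℝ) ∈ Set.Ico (0:ℝ) 1)]
      with t ht using key t ht
  have hlim := le_of_tendsto hf hev
  rw [hD] at hlim
  norm_num at hlim
  linarith [hlim]
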